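/- arXiv:2206.03466 — 2 statements merged into one kernel-verified Lean document; each statement's English description precedes it below -/
import Mathlib

section
/- For a gradient-flow trajectory of a two-layer ReLU network on an orthogonally separable dataset, starting from a balanced and live initialisation, with either the exponential or the logistic loss: for all j ∈ [k] and all t ≥ 0, the vector w_j(t) − w_j(0) lies in cone(sgn(a_j) y_1 x_1, ..., sgn(a_j) y_n x_n), where sgn(a_j) is the (constant) sign of a_j along the trajectory and cone(u_1,...,u_m) = {Σ_i b_i u_i : b_1,...,b_m ≥ 0}. -/
open MeasureTheory Filter Finset

/-- Euclidean inner product of real vectors. -/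
noncomputable def dotp {m : ℕ} (u v : Fin m → ℝ) : ℝ := ∑ i, u i * v i

/-- Euclidean norm of a real vector. -/
noncomputable def norm2 {m : ℕ} (v : Fin m → ℝ) : ℝ := Real.sqrt (∑ i, v i ^ 2)

/-- The ReLU function `ψ(u) = max{u, 0}`. -/
noncomputable def relu (u : ℝ) : ℝ := max u 0

/-- The two-layer ReLU network `N_θ(z) = Σ_j a_j ψ(w_jᵀ z)`. -/
noncomputable def net {d k : ℕ} (w : Fin k → Fin d → ℝ) (a : Fin k → ℝ)
    (z : Fin d → ℝ) : ℝ :=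
  ∑ j, a j * relu (dotp (w j) z)



lemma sum_mul_sum_comm {p q : ℕ} (W : Fin p → ℝ) (E : Fin q → ℝ) (X : Fin q → Fin p → ℝ) :
    ∑ ic, W ic * (∑ i, E i * X i ic) = ∑ i, E i * (∑ ic, W ic * X i ic) := by
  simp only [Finset.mul_sum]
  rw [Finset.sum_comm]
  exact Finset.sum_congr rfl fun i _ => Finset.sum_congr rfl fun ic _ => by ring

lemma abs_dot_le {p : ℕ} (v z : Fin p → ℝ) :
    |∑ i, v i * z i| ≤ Real.sqrt (∑ i, v i ^ 2) * Real.sqrt (∑ i, z i ^ 2) := by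
  have h := Finset.sum_mul_sq_le_sq_mul_sq Finset.univ v z
  have h1 : |∑ i, v i * z i| = Real.sqrt ((∑ i, v i * z i) ^ 2) := (Real.sqrt_sq_eq_abs _).symm
  rw [h1, ← Real.sqrt_mul (by positivity)]
  exact Real.sqrt_le_sqrt h

lemma primitive_sq (f : ℝ → ℝ) (hf : ∀ r : ℝ, IntervalIntegrable f volume 0 r)
    {t : ℝ} (ht : 0 ≤ t) :
    (∫ s in (0:ℝ)..t, f s) ^ 2 = 2 * ∫ s in (0:ℝ)..t, (∫ r in (0:ℝ)..s, f r) * f s := by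
  have hff : ∀ a b : ℝ, IntervalIntegrable f volume a b := fun a b => (hf a).symm.trans (hf b)
  have hPc : Continuous fun s => ∫ r in (0:ℝ)..s, f r :=
    intervalIntegral.continuous_primitive hff 0
  set μ : Measure ℝ := volume.restrict (Set.Ioc (0:ℝ) t) with hμ
  have hfi : Integrable f μ := (intervalIntegrable_iff_integrableOn_Ioc_of_le ht).1 (hf t)
  have hPfI : IntervalIntegrable (fun s => (∫ r in (0:ℝ)..s, f r) * f s) volume 0 t :=
    (hf t).continuousOn_mul hPc.continuousOn
  have hPf : Integrable (fun s => (∫ r in (0:ℝ)..s, f r) * f s) μ :=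
    (intervalIntegrable_iff_integrableOn_Ioc_of_le ht).1 hPfI
  set A : Set (ℝ × ℝ) := {pp | pp.2 ≤ pp.1} with hA
  have hAm : MeasurableSet A := measurableSet_le measurable_snd measurable_fst
  set G : ℝ × ℝ → ℝ := fun pp => f pp.1 * f pp.2 with hG
  have hGi : Integrable G (μ.prod μ) := hfi.mul_prod hfi
  have hFi : Integrable (A.indicator G) (μ.prod μ) := hGi.indicator hAm
  have hswap := MeasureTheory.integral_integral_swap
      (f := fun u s => A.indicator G (u, s)) (μ := μ) (ν := μ)
      (by exact hFi)
  have hL : (∫ u, ∫ s, A.indicator G (u, s) ∂μ ∂μ)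
      = ∫ u, (∫ r in (0:ℝ)..u, f r) * f u ∂μ := by
    refine integral_congr_ae ?_
    filter_upwards [ae_restrict_mem measurableSet_Ioc] with u hu
    have h1 : (fun s => A.indicator G (u, s))
        = Set.indicator (Set.Iic u) (fun s => f u * f s) := by
      funext s
      by_cases hs : s ≤ u <;> simp [Set.indicator, hA, hG, hs]
    have hset : Set.Iic u ∩ Set.Ioc 0 t = Set.Ioc 0 u := by
      ext s
      simp only [Set.mem_inter_iff, Set.mem_Iic, Set.mem_Ioc]
      exact ⟨fun h => ⟨h.2.1, h.1⟩, fun h => ⟨h.2, h.1, h.2.trans hu.2⟩⟩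
    rw [h1, integral_indicator measurableSet_Iic, hμ,
      Measure.restrict_restrict measurableSet_Iic, hset, integral_const_mul,
      ← intervalIntegral.integral_of_le hu.1.le, mul_comm]
  have hR : (∫ s, ∫ u, A.indicator G (u, s) ∂μ ∂μ)
      = (∫ r in (0:ℝ)..t, f r) * (∫ r in (0:ℝ)..t, f r)
        - ∫ s, (∫ r in (0:ℝ)..s, f r) * f s ∂μ := by
    have h0 : (∫ s, ∫ u, A.indicator G (u, s) ∂μ ∂μ)
        = ∫ s, ((∫ r in (0:ℝ)..t, f r) - (∫ r in (0:ℝ)..s, f r)) * f s ∂μ := by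
      refine integral_congr_ae ?_
      filter_upwards [ae_restrict_mem measurableSet_Ioc] with s hs
      have h1 : (fun u => A.indicator G (u, s))
          = Set.indicator (Set.Ici s) (fun u => f u * f s) := by
        funext u
        by_cases hus : s ≤ u <;> simp [Set.indicator, hA, hG, hus]
      have hset : Set.Ici s ∩ Set.Ioc 0 t = Set.Icc s t := by
        ext u
        simp only [Set.mem_inter_iff, Set.mem_Ici, Set.mem_Ioc, Set.mem_Icc]
        exact ⟨fun h => ⟨h.1, h.2.2⟩, fun h => ⟨h.1, hs.1.trans_le h.1, h.2⟩⟩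
      have hsub : (∫ r in (0:ℝ)..t, f r) - (∫ r in (0:ℝ)..s, f r) = ∫ u in s..t, f u :=
        intervalIntegral.integral_interval_sub_left (hf t) (hf s)
      rw [h1, integral_indicator measurableSet_Ici, hμ,
        Measure.restrict_restrict measurableSet_Ici, hset, integral_Icc_eq_integral_Ioc,
        integral_mul_const, hsub, intervalIntegral.integral_of_le hs.2]
    rw [h0]
    have h2 : ∀ s, ((∫ r in (0:ℝ)..t, f r) - (∫ r in (0:ℝ)..s, f r)) * f s
        = (∫ r in (0:ℝ)..t, f r) * f s - (∫ r in (0:ℝ)..s, f r) * f s := fun s => by ring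
    simp only [h2]
    rw [integral_sub (hfi.const_mul _) hPf, integral_const_mul,
      ← intervalIntegral.integral_of_le ht]
  have hswap' : (∫ u, ∫ s, A.indicator G (u, s) ∂μ ∂μ)
      = ∫ s, ∫ u, A.indicator G (u, s) ∂μ ∂μ := by simpa using hswap
  have hkey : (∫ u, (∫ r in (0:ℝ)..u, f r) * f u ∂μ)
      = (∫ r in (0:ℝ)..t, f r) * (∫ r in (0:ℝ)..t, f r)
        - ∫ s, (∫ r in (0:ℝ)..s, f r) * f s ∂μ := by
    exact hL.symm.trans (hswap'.trans hR)
  have e2 : (∫ r in (0:ℝ)..t, f r) = ∫ x, f x ∂μ := intervalIntegral.integral_of_le ht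
  have e1 : (∫ s in (0:ℝ)..t, (∫ r in (0:ℝ)..s, f r) * f s)
      = ∫ s, (∫ r in (0:ℝ)..s, f r) * f s ∂μ := intervalIntegral.integral_of_le ht
  rw [pow_two, e1]
  linarith [hkey]

lemma sq_FTC (g g' : ℝ → ℝ) (hint : ∀ r : ℝ, IntervalIntegrable g' volume 0 r)
    (hg : ∀ s, g s = g 0 + ∫ r in (0:ℝ)..s, g' r) {t : ℝ} (ht : 0 ≤ t) :
    g t ^ 2 = g 0 ^ 2 + ∫ s in (0:ℝ)..t, 2 * g s * g' s := by
  have hff : ∀ a b : ℝ, IntervalIntegrable g' volume a b := fun a b => (hint a).symm.trans (hint b)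
  have hPc : Continuous fun s => ∫ r in (0:ℝ)..s, g' r :=
    intervalIntegral.continuous_primitive hff 0
  have h1 : ∀ s, 2 * g s * g' s
      = (2 * g 0) * g' s + 2 * ((∫ r in (0:ℝ)..s, g' r) * g' s) := fun s => by
    rw [hg s]; ring
  have hI1 : IntervalIntegrable (fun s => (2 * g 0) * g' s) volume 0 t := (hint t).const_mul _
  have hI2 : IntervalIntegrable (fun s => 2 * ((∫ r in (0:ℝ)..s, g' r) * g' s)) volume 0 t :=
    ((hint t).continuousOn_mul hPc.continuousOn).const_mul 2
  rw [intervalIntegral.integral_congr (g := fun s => (2 * g 0) * g' s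
      + 2 * ((∫ r in (0:ℝ)..s, g' r) * g' s)) (fun s _ => h1 s),
    intervalIntegral.integral_add hI1 hI2, intervalIntegral.integral_const_mul,
    intervalIntegral.integral_const_mul]
  have hps := primitive_sq g' hint ht
  have hgt := hg t
  rw [hgt, add_sq]
  linarith [hps]

lemma gronwall_zero (u : ℝ → ℝ) (M c b : ℝ) (hcb : c ≤ b) (hM : 0 ≤ M)
    (hu : ContinuousOn u (Set.Icc c b)) (hnn : ∀ r ∈ Set.Icc c b, 0 ≤ u r)
    (hrec : ∀ r ∈ Set.Icc c b, u r ≤ M * ∫ s in r..b, u s) :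
    ∀ r ∈ Set.Icc c b, u r = 0 := by
  obtain ⟨sK, hsK, hK⟩ := isCompact_Icc.exists_isMaxOn ⟨c, Set.left_mem_Icc.2 hcb⟩ hu
  rw [isMaxOn_iff] at hK
  set K := u sK with hKdef
  have hK0 : 0 ≤ K := hnn sK hsK
  have hInt : ∀ r ∈ Set.Icc c b, IntervalIntegrable u volume r b := by
    intro r hr
    apply ContinuousOn.intervalIntegrable
    apply hu.mono
    rw [Set.uIcc_of_le hr.2]
    exact Set.Icc_subset_Icc hr.1 le_rfl
  have key : ∀ N : ℕ, ∀ r ∈ Set.Icc c b, u r ≤ K * (M * (b - r)) ^ N / (N.factorial : ℝ) := by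
    intro N
    induction N with
    | zero => intro r hr; simpa using hK r hr
    | succ N ih =>
      intro r hr
      have hcI : Continuous fun s : ℝ => K * (M * (b - s)) ^ N / (N.factorial : ℝ) := by
        fun_prop
      have h2 : (∫ s in r..b, u s)
          ≤ ∫ s in r..b, K * (M * (b - s)) ^ N / (N.factorial : ℝ) := by
        apply intervalIntegral.integral_mono_on hr.2 (hInt r hr)
          (hcI.intervalIntegrable _ _)
        intro sx hsx
        exact ih sx ⟨hr.1.trans hsx.1, hsx.2⟩
      have h3 : (∫ s in r..b, K * (M * (b - s)) ^ N / (N.factorial : ℝ))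
          = K * M ^ N / (N.factorial : ℝ) * ((b - r) ^ (N + 1) / (N + 1)) := by
        have hcong : ∀ s, K * (M * (b - s)) ^ N / (N.factorial : ℝ)
            = (K * M ^ N / (N.factorial : ℝ)) * (b - s) ^ N := fun s => by
          rw [mul_pow]; ring
        rw [intervalIntegral.integral_congr (g := fun s =>
            (K * M ^ N / (N.factorial : ℝ)) * (b - s) ^ N) (fun s _ => hcong s),
          intervalIntegral.integral_const_mul]
        congr 1
        have hc := intervalIntegral.integral_comp_sub_left (a := r) (b := b)
          (fun s => s ^ N) b
        rw [hc]
        simp [integral_pow]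
      have step : u r ≤ M * (K * M ^ N / (N.factorial : ℝ) * ((b - r) ^ (N + 1) / (N + 1))) := by
        calc u r ≤ M * ∫ s in r..b, u s := hrec r hr
          _ ≤ _ := by
              rw [← h3]
              exact mul_le_mul_of_nonneg_left h2 hM
      calc u r ≤ M * (K * M ^ N / (N.factorial : ℝ) * ((b - r) ^ (N + 1) / (N + 1))) := step
        _ = K * (M * (b - r)) ^ (N + 1) / ((N + 1).factorial : ℝ) := by
            rw [mul_pow, Nat.factorial_succ]
            push_cast
            have hfac : (N.factorial : ℝ) ≠ 0 := by positivity
            have hN1 : ((N : ℝ) + 1) ≠ 0 := by positivity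
            field_simp
            ring
  intro r hr
  have htend : Tendsto (fun N : ℕ => K * (M * (b - r)) ^ N / (N.factorial : ℝ))
      atTop (nhds 0) := by
    have h1 := FloorSemiring.tendsto_pow_div_factorial_atTop (K := ℝ) (M * (b - r))
    have h2 := h1.const_mul K
    simpa [mul_div_assoc, mul_zero] using h2
  have hle : u r ≤ 0 :=
    le_of_tendsto_of_tendsto' tendsto_const_nhds htend (fun N => key N r hr)
  exact le_antisymm hle (hnn r hr)


set_option maxHeartbeats 1000000 in
/-- for all `j` and `t ≥ 0`, `w_j(t) − w_j(0)` lies in `cone(sgn(a_j) y₁ x₁, ..., sgn(a_j) y_n x_n)`. -/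
theorem gradient_flow_cone_membership
    (d n k : ℕ) (x : Fin n → Fin d → ℝ) (y : Fin n → ℝ)
    (hy : ∀ i, y i = 1 ∨ y i = -1)
    (hsep1 : ∀ i i', y i = y i' → 0 < dotp (x i) (x i'))
    (hsep2 : ∀ i i', y i ≠ y i' → dotp (x i) (x i') ≤ 0)
    (ℓ : ℝ → ℝ)
    (hℓ : (ℓ = fun u => Real.exp (-u)) ∨ (ℓ = fun u => Real.log (1 + Real.exp (-u))))
    (w : ℝ → Fin k → Fin d → ℝ) (a : ℝ → Fin k → ℝ)
    (w' : ℝ → Fin k → Fin d → ℝ) (a' : ℝ → Fin k → ℝ)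
    (hwInt : ∀ (j : Fin k) (i : Fin d) (t : ℝ),
      IntervalIntegrable (fun s => w' s j i) volume 0 t)
    (haInt : ∀ (j : Fin k) (t : ℝ), IntervalIntegrable (fun s => a' s j) volume 0 t)
    (hwFTC : ∀ (t : ℝ) (j : Fin k) (i : Fin d),
      w t j i = w 0 j i + ∫ s in (0:ℝ)..t, w' s j i)
    (haFTC : ∀ (t : ℝ) (j : Fin k), a t j = a 0 j + ∫ s in (0:ℝ)..t, a' s j)
    (hODE : ∀ᵐ t ∂(volume.restrict (Set.Ici (0:ℝ))),
      ∃ σ : Fin n → Fin k → ℝ,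
        (∀ i j, 0 ≤ σ i j ∧ σ i j ≤ 1) ∧
        (∀ i j, dotp (w t j) (x i) < 0 → σ i j = 0) ∧
        (∀ i j, 0 < dotp (w t j) (x i) → σ i j = 1) ∧
        (∀ j ic, w' t j ic =
          -∑ i, deriv ℓ (y i * net (w t) (a t) (x i)) * y i * a t j * σ i j * x i ic) ∧
        (∀ j, a' t j =
          -∑ i, deriv ℓ (y i * net (w t) (a t) (x i)) * y i * relu (dotp (w t j) (x i))))
    (hbal : ∀ j, |a 0 j| = norm2 (w 0 j) ∧ a 0 j ≠ 0)
    (hlive : ∀ s : ℝ, s = 1 ∨ s = -1 →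
      ∃ i j, y i = s ∧ 0 < y i * a 0 j * relu (dotp (w 0 j) (x i))) :
    ∀ (j : Fin k) (t : ℝ), 0 ≤ t →
      ∃ b : Fin n → ℝ, (∀ i, 0 ≤ b i) ∧
        ∀ ic, w t j ic - w 0 j ic = ∑ i, b i * (Real.sign (a 0 j) * y i * x i ic) := by
  classical
  -- derivative of the loss
  obtain ⟨L, hLd, hLc, hLnp⟩ : ∃ L : ℝ → ℝ, deriv ℓ = L ∧ Continuous L ∧ ∀ u, L u ≤ 0 := by
    rcases hℓ with h | h
    · refine ⟨fun u => -Real.exp (-u), ?_, (Real.continuous_exp.comp continuous_neg).neg,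
        fun u => neg_nonpos.2 (Real.exp_pos _).le⟩
      funext u
      have hd : HasDerivAt ℓ (-Real.exp (-u)) u := by
        rw [h]
        have := (Real.hasDerivAt_exp (-u)).comp u (hasDerivAt_neg u)
        simpa [Function.comp_def] using this
      exact hd.deriv
    · refine ⟨fun u => -Real.exp (-u) / (1 + Real.exp (-u)), ?_, ?_, ?_⟩
      · funext u
        have hpos : (0:ℝ) < 1 + Real.exp (-u) := by positivity
        have h1 : HasDerivAt (fun v : ℝ => 1 + Real.exp (-v)) (-Real.exp (-u)) u := by
          have := ((Real.hasDerivAt_exp (-u)).comp u (hasDerivAt_neg u)).const_add 1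
          simpa [Function.comp] using this
        have h2 : HasDerivAt ℓ (-Real.exp (-u) / (1 + Real.exp (-u))) u := by
          rw [h]; exact h1.log hpos.ne'
        exact h2.deriv
      · exact Continuous.div (Real.continuous_exp.comp continuous_neg).neg
          (continuous_const.add (Real.continuous_exp.comp continuous_neg))
          (fun u => by positivity)
      · exact fun u => div_nonpos_of_nonpos_of_nonneg
          (neg_nonpos.2 (Real.exp_pos _).le) (by positivity)
  -- basic integrability/continuity facts
  have haInt2 : ∀ (j' : Fin k) (p q : ℝ), IntervalIntegrable (fun s => a' s j') volume p q :=
    fun j' p q => ((haInt j' p).symm.trans (haInt j' q))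
  have hwInt2 : ∀ (j' : Fin k) (ic : Fin d) (p q : ℝ),
      IntervalIntegrable (fun s => w' s j' ic) volume p q :=
    fun j' ic p q => ((hwInt j' ic p).symm.trans (hwInt j' ic q))
  have contA : ∀ j', Continuous fun s => a s j' := by
    intro j'
    have h : (fun s => a s j') = fun s => a 0 j' + ∫ r in (0:ℝ)..s, a' r j' :=
      funext fun s => haFTC s j'
    rw [h]
    exact continuous_const.add (intervalIntegral.continuous_primitive (haInt2 j') 0)
  have contW : ∀ j' ic, Continuous fun s => w s j' ic := by
    intro j' ic
    have h : (fun s => w s j' ic) = fun s => w 0 j' ic + ∫ r in (0:ℝ)..s, w' r j' ic :=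
      funext fun s => hwFTC s j' ic
    rw [h]
    exact continuous_const.add (intervalIntegral.continuous_primitive (hwInt2 j' ic) 0)
  have contDot : ∀ j' i, Continuous fun s => dotp (w s j') (x i) := by
    intro j' i
    unfold dotp
    exact continuous_finset_sum _ fun ic _ => (contW j' ic).mul continuous_const
  have contNet : ∀ i, Continuous fun s => net (w s) (a s) (x i) := by
    intro i
    unfold net relu
    exact continuous_finset_sum _ fun j' _ => (contA j').mul ((contDot j' i).max continuous_const)
  intro j t ht
  -- balance at time 0
  have hbal0 : (a 0 j) ^ 2 = ∑ ic, (w 0 j ic) ^ 2 := by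
    have h1 := (hbal j).1
    have h2 : (0:ℝ) ≤ ∑ ic, (w 0 j ic) ^ 2 := Finset.sum_nonneg fun _ _ => sq_nonneg _
    calc (a 0 j) ^ 2 = |a 0 j| ^ 2 := (sq_abs _).symm
      _ = Real.sqrt (∑ ic, (w 0 j ic) ^ 2) ^ 2 := by rw [h1]; rfl
      _ = _ := Real.sq_sqrt h2
  -- balance for all nonnegative times
  have hbalance : ∀ τ : ℝ, 0 ≤ τ → (a τ j) ^ 2 = ∑ ic, (w τ j ic) ^ 2 := by
    intro τ hτ
    have hA := sq_FTC (fun s => a s j) (fun s => a' s j) (haInt j) (fun s => haFTC s j) hτ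
    have hW : ∀ ic, (w τ j ic) ^ 2
        = (w 0 j ic) ^ 2 + ∫ s in (0:ℝ)..τ, 2 * w s j ic * w' s j ic :=
      fun ic => sq_FTC (fun s => w s j ic) (fun s => w' s j ic) (hwInt j ic)
        (fun s => hwFTC s j ic) hτ
    have hWIint : ∀ ic, IntervalIntegrable (fun s => 2 * w s j ic * w' s j ic) volume 0 τ :=
      fun ic => (hwInt j ic τ).continuousOn_mul
        ((continuous_const.mul (contW j ic)).continuousOn)
    have hAIint : IntervalIntegrable (fun s => 2 * a s j * a' s j) volume 0 τ :=
      (haInt j τ).continuousOn_mul ((continuous_const.mul (contA j)).continuousOn)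
    have hWsumInt : IntervalIntegrable (fun s => ∑ ic, 2 * w s j ic * w' s j ic) volume 0 τ := by
      have hh := IntervalIntegrable.sum (μ := volume) (a := (0:ℝ)) (b := τ)
        (f := fun ic s => 2 * w s j ic * w' s j ic) Finset.univ (fun ic _ => hWIint ic)
      rwa [Finset.sum_fn] at hh
    have hsum : ∑ ic, (w τ j ic) ^ 2
        = (∑ ic, (w 0 j ic) ^ 2) + ∫ s in (0:ℝ)..τ, ∑ ic, 2 * w s j ic * w' s j ic := by
      rw [intervalIntegral.integral_finset_sum (fun ic _ => hWIint ic),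
        ← Finset.sum_add_distrib]
      exact Finset.sum_congr rfl fun ic _ => hW ic
    have hzero : (∫ s in (0:ℝ)..τ,
        (2 * a s j * a' s j - ∑ ic, 2 * w s j ic * w' s j ic)) = 0 := by
      rw [intervalIntegral.integral_of_le hτ]
      apply integral_eq_zero_of_ae
      have hsub : Set.Ioc (0:ℝ) τ ⊆ Set.Ici (0:ℝ) := fun s hs => le_of_lt hs.1
      filter_upwards [ae_restrict_of_ae_restrict_of_subset hsub hODE] with s hσ
      obtain ⟨σ, hσ01, hσ0, hσ1, hw', ha'⟩ := hσ
      have hrelu : ∀ i, σ i j * dotp (w s j) (x i) = relu (dotp (w s j) (x i)) := by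
        intro i
        rcases lt_trichotomy (dotp (w s j) (x i)) 0 with h | h | h
        · rw [hσ0 i j h]; simp [relu, max_eq_right h.le]
        · simp [relu, h]
        · rw [hσ1 i j h]; simp [relu, max_eq_left h.le]
      have eA : 2 * a s j * a' s j
          = -∑ i, 2 * a s j * (deriv ℓ (y i * net (w s) (a s) (x i)) * y i
              * relu (dotp (w s j) (x i))) := by
        rw [ha' j, mul_neg, Finset.mul_sum]
      have eW : ∑ ic, 2 * w s j ic * w' s j ic
          = -∑ i, (deriv ℓ (y i * net (w s) (a s) (x i)) * y i * a s j * σ i j)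
              * (2 * dotp (w s j) (x i)) := by
        calc ∑ ic, 2 * w s j ic * w' s j ic
            = ∑ ic, -((2 * w s j ic) * (∑ i, (deriv ℓ (y i * net (w s) (a s) (x i)) * y i
                * a s j * σ i j) * x i ic)) := by
              refine Finset.sum_congr rfl fun ic _ => ?_
              rw [hw' j ic, mul_neg]
          _ = -∑ ic, (2 * w s j ic) * (∑ i, (deriv ℓ (y i * net (w s) (a s) (x i)) * y i
                * a s j * σ i j) * x i ic) := Finset.sum_neg_distrib _
          _ = -∑ i, (deriv ℓ (y i * net (w s) (a s) (x i)) * y i * a s j * σ i j)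
                * (∑ ic, (2 * w s j ic) * x i ic) := by rw [sum_mul_sum_comm]
          _ = -∑ i, (deriv ℓ (y i * net (w s) (a s) (x i)) * y i * a s j * σ i j)
                * (2 * dotp (w s j) (x i)) := by
              congr 1
              refine Finset.sum_congr rfl fun i _ => ?_
              congr 1
              unfold dotp
              rw [Finset.mul_sum]
              exact Finset.sum_congr rfl fun ic _ => by ring
      rw [eA, eW, neg_sub_neg, ← Finset.sum_sub_distrib]
      apply Finset.sum_eq_zero
      intro i _
      linear_combination (2 * a s j * (deriv ℓ (y i * net (w s) (a s) (x i)) * y i))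
        * (hrelu i)
    calc (a τ j) ^ 2 = (a 0 j) ^ 2 + ∫ s in (0:ℝ)..τ, 2 * a s j * a' s j := hA
      _ = (∑ ic, (w 0 j ic) ^ 2) + ∫ s in (0:ℝ)..τ, 2 * a s j * a' s j := by rw [hbal0]
      _ = ∑ ic, (w τ j ic) ^ 2 := by
          rw [hsum]
          have hdiff : (∫ s in (0:ℝ)..τ, 2 * a s j * a' s j)
              - (∫ s in (0:ℝ)..τ, ∑ ic, 2 * w s j ic * w' s j ic) = 0 := by
            rw [← intervalIntegral.integral_sub hAIint hWsumInt]
            exact hzero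
          linarith [hdiff]
  -- `a · j` never vanishes on nonnegative times
  have hnozero : ∀ T : ℝ, 0 ≤ T → ∀ τ ∈ Set.Icc (0:ℝ) T, a τ j ≠ 0 := by
    intro T hT τ hτmem hτz
    have hτ0 : 0 ≤ τ := hτmem.1
    have contPhi : Continuous fun s =>
        ∑ i, |L (y i * net (w s) (a s) (x i))| * Real.sqrt (∑ ic, (x i ic) ^ 2) :=
      continuous_finset_sum _ fun i _ =>
        ((hLc.comp (continuous_const.mul (contNet i))).abs).mul continuous_const
    obtain ⟨M, hM0, hsM⟩ : ∃ M : ℝ, 0 ≤ M ∧ ∀ s ∈ Set.Icc (0:ℝ) T,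
        (∑ i, |L (y i * net (w s) (a s) (x i))| * Real.sqrt (∑ ic, (x i ic) ^ 2)) ≤ M := by
      obtain ⟨sM, hsMmem, hb⟩ := isCompact_Icc.exists_isMaxOn
        ⟨0, Set.left_mem_Icc.2 hT⟩ contPhi.continuousOn
      rw [isMaxOn_iff] at hb
      exact ⟨∑ i, |L (y i * net (w sM) (a sM) (x i))| * Real.sqrt (∑ ic, (x i ic) ^ 2),
        Finset.sum_nonneg fun i _ => mul_nonneg (abs_nonneg _) (Real.sqrt_nonneg _),
        fun s hs => hb s hs⟩
    have hrec : ∀ r ∈ Set.Icc (0:ℝ) τ, |a r j| ≤ M * ∫ s in r..τ, |a s j| := by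
      intro r hr
      have h1 : a τ j - a r j = ∫ s in r..τ, a' s j := by
        have h0 := intervalIntegral.integral_interval_sub_left (haInt j τ) (haInt j r)
        rw [haFTC τ j, haFTC r j]
        linarith [h0]
      have h2 : |a r j| = |∫ s in r..τ, a' s j| := by
        rw [← h1, hτz, zero_sub, abs_neg]
      have h3 : |∫ s in r..τ, a' s j| ≤ ∫ s in r..τ, |a' s j| :=
        intervalIntegral.abs_integral_le_integral_abs hr.2
      have h4 : (∫ s in r..τ, |a' s j|) ≤ ∫ s in r..τ, M * |a s j| := by
        apply intervalIntegral.integral_mono_ae_restrict hr.2 ((haInt2 j r τ).abs)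
          ((continuous_const.mul (contA j).abs).intervalIntegrable _ _)
        have hsub : Set.Icc r τ ⊆ Set.Ici (0:ℝ) := fun sx hsx => hr.1.trans hsx.1
        filter_upwards [ae_restrict_of_ae_restrict_of_subset hsub hODE,
          ae_restrict_mem measurableSet_Icc] with s hσ hs
        obtain ⟨σ, hσ01, hσ0, hσ1, hw', ha'⟩ := hσ
        have hs0 : (0:ℝ) ≤ s := hr.1.trans hs.1
        have hsT : s ∈ Set.Icc (0:ℝ) T := ⟨hs0, hs.2.trans hτmem.2⟩
        have hwnorm : Real.sqrt (∑ ic, (w s j ic) ^ 2) = |a s j| := by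
          rw [← hbalance s hs0, Real.sqrt_sq_eq_abs]
        calc |a' s j| = |∑ i, deriv ℓ (y i * net (w s) (a s) (x i)) * y i
              * relu (dotp (w s j) (x i))| := by rw [ha' j, abs_neg]
          _ ≤ ∑ i, |deriv ℓ (y i * net (w s) (a s) (x i)) * y i
              * relu (dotp (w s j) (x i))| := Finset.abs_sum_le_sum_abs _ _
          _ ≤ ∑ i, |L (y i * net (w s) (a s) (x i))|
              * Real.sqrt (∑ ic, (x i ic) ^ 2) * |a s j| := by
              refine Finset.sum_le_sum fun i _ => ?_
              have h0relu : (0:ℝ) ≤ relu (dotp (w s j) (x i)) := le_max_right _ _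
              have hyi : |y i| = 1 := by rcases hy i with h | h <;> simp [h]
              have hd : relu (dotp (w s j) (x i))
                  ≤ Real.sqrt (∑ ic, (x i ic) ^ 2) * |a s j| := by
                have h1' : relu (dotp (w s j) (x i)) ≤ |dotp (w s j) (x i)| :=
                  max_le (le_abs_self _) (abs_nonneg _)
                have h3' : |dotp (w s j) (x i)|
                    ≤ Real.sqrt (∑ ic, (w s j ic) ^ 2) * Real.sqrt (∑ ic, (x i ic) ^ 2) := by
                  unfold dotp
                  exact abs_dot_le _ _
                calc relu (dotp (w s j) (x i)) ≤ |dotp (w s j) (x i)| := h1'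
                  _ ≤ Real.sqrt (∑ ic, (w s j ic) ^ 2)
                      * Real.sqrt (∑ ic, (x i ic) ^ 2) := h3'
                  _ = Real.sqrt (∑ ic, (x i ic) ^ 2) * |a s j| := by
                      rw [hwnorm, mul_comm]
              calc |deriv ℓ (y i * net (w s) (a s) (x i)) * y i
                    * relu (dotp (w s j) (x i))|
                  = |L (y i * net (w s) (a s) (x i))| * relu (dotp (w s j) (x i)) := by
                    rw [abs_mul, abs_mul, hyi, mul_one, abs_of_nonneg h0relu, hLd]
                _ ≤ |L (y i * net (w s) (a s) (x i))|
                    * (Real.sqrt (∑ ic, (x i ic) ^ 2) * |a s j|) :=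
                    mul_le_mul_of_nonneg_left hd (abs_nonneg _)
                _ = |L (y i * net (w s) (a s) (x i))|
                    * Real.sqrt (∑ ic, (x i ic) ^ 2) * |a s j| := (mul_assoc _ _ _).symm
          _ = (∑ i, |L (y i * net (w s) (a s) (x i))|
              * Real.sqrt (∑ ic, (x i ic) ^ 2)) * |a s j| := by rw [Finset.sum_mul]
          _ ≤ M * |a s j| := mul_le_mul_of_nonneg_right (hsM s hsT) (abs_nonneg _)
      rw [h2]
      calc |∫ s in r..τ, a' s j| ≤ ∫ s in r..τ, |a' s j| := h3
        _ ≤ ∫ s in r..τ, M * |a s j| := h4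
        _ = M * ∫ s in r..τ, |a s j| := intervalIntegral.integral_const_mul _ _
    have hz := gronwall_zero (fun r => |a r j|) M 0 τ hτ0 hM0
      ((contA j).abs.continuousOn) (fun r _ => abs_nonneg _) hrec 0 (Set.left_mem_Icc.2 hτ0)
    exact (hbal j).2 (abs_eq_zero.1 hz)
  -- sign facts
  set S0 := Real.sign (a 0 j) with hS0def
  have hS0cases : S0 = 1 ∨ S0 = -1 := by
    rcases lt_or_gt_of_ne (hbal j).2 with h | h
    · right; exact Real.sign_of_neg h
    · left; exact Real.sign_of_pos h
  have hS0ne : S0 ≠ 0 := by rcases hS0cases with h | h <;> rw [h] <;> norm_num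
  have hS0sq : S0 * S0 = 1 := by rcases hS0cases with h | h <;> rw [h] <;> norm_num
  have hS0abs : S0 * a 0 j = |a 0 j| := by
    rcases lt_or_gt_of_ne (hbal j).2 with h | h
    · rw [hS0def, Real.sign_of_neg h, abs_of_neg h]; ring
    · rw [hS0def, Real.sign_of_pos h, abs_of_pos h]; ring
  have hpos : ∀ s : ℝ, 0 ≤ s → 0 < S0 * a s j := by
    intro s hs
    have hnz := hnozero s hs
    by_contra hle
    push_neg at hle
    have hne : S0 * a s j ≠ 0 := mul_ne_zero hS0ne (hnz s (Set.right_mem_Icc.2 hs))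
    have hlt : S0 * a s j < 0 := lt_of_le_of_ne hle hne
    have hg0 : 0 < S0 * a 0 j := by rw [hS0abs]; exact abs_pos.2 (hbal j).2
    have hcont : ContinuousOn (fun τ => S0 * a τ j) (Set.Icc 0 s) :=
      (continuous_const.mul (contA j)).continuousOn
    have h0mem : (0:ℝ) ∈ Set.Icc (S0 * a s j) (S0 * a 0 j) := ⟨hlt.le, hg0.le⟩
    obtain ⟨τ, hτmem, hτeq⟩ := intermediate_value_Icc' hs hcont h0mem
    rcases mul_eq_zero.1 hτeq with h | h
    · exact hS0ne h
    · exact hnz τ hτmem h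
  -- the case t = 0
  rcases eq_or_lt_of_le ht with rfl | htpos
  · refine ⟨fun _ => 0, fun i => le_rfl, fun ic => by simp⟩
  -- the cone
  set C : Set (Fin d → ℝ) :=
    {v | ∃ b : Fin n → ℝ, (∀ i, 0 ≤ b i) ∧ v = fun ic => ∑ i, b i * (S0 * y i * x i ic)}
    with hC
  have hCconv : Convex ℝ C := by
    rintro v1 ⟨b1, hb1, rfl⟩ v2 ⟨b2, hb2, rfl⟩ p q hp hq hpq
    refine ⟨fun i => p * b1 i + q * b2 i,
      fun i => add_nonneg (mul_nonneg hp (hb1 i)) (mul_nonneg hq (hb2 i)), ?_⟩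
    funext ic
    simp only [Pi.add_apply, Pi.smul_apply, smul_eq_mul]
    rw [Finset.mul_sum, Finset.mul_sum, ← Finset.sum_add_distrib]
    exact Finset.sum_congr rfl fun i _ => by ring
  have hCclosed : IsClosed C := by
    rcases Nat.eq_zero_or_pos n with hn | hn
    · haveI : IsEmpty (Fin n) := by subst hn; infer_instance
      have hCeq : C = {(fun _ => 0 : Fin d → ℝ)} := by
        ext v
        simp only [hC, Set.mem_setOf_eq, Set.mem_singleton_iff]
        constructor
        · rintro ⟨b, hb, rfl⟩
          funext ic
          simp
        · rintro rfl
          exact ⟨fun _ => 0, fun i => le_rfl, by funext ic; simp⟩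
      rw [hCeq]
      exact isClosed_singleton
    · haveI : Nonempty (Fin n) := ⟨⟨0, hn⟩⟩
      have hxpos : ∀ i, 0 < ∑ ic, (x i ic) ^ 2 := by
        intro i
        have h := hsep1 i i rfl
        have hh : dotp (x i) (x i) = ∑ ic, (x i ic) ^ 2 := by
          unfold dotp
          exact Finset.sum_congr rfl fun ic _ => (pow_two _).symm
        rw [hh] at h
        exact h
      have hcminpos : 0 < Finset.univ.inf' Finset.univ_nonempty
          (fun i : Fin n => ∑ ic, (x i ic) ^ 2) :=
        (Finset.lt_inf'_iff _).2 fun i _ => hxpos i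
      set cmin : ℝ := Finset.univ.inf' Finset.univ_nonempty
        (fun i : Fin n => ∑ ic, (x i ic) ^ 2) with hcmin
      have hcmin_le : ∀ i, cmin ≤ ∑ ic, (x i ic) ^ 2 :=
        fun i => Finset.inf'_le _ (Finset.mem_univ i)
      have hyy1 : ∀ i i' : Fin n, y i = y i' → y i * y i' = 1 := by
        intro i i' h
        rw [h]
        rcases hy i' with h2 | h2 <;> rw [h2] <;> norm_num
      have hyy2 : ∀ i i' : Fin n, y i ≠ y i' → y i * y i' = -1 := by
        intro i i' h
        rcases hy i with h2 | h2 <;> rcases hy i' with h3 | h3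
        · exact absurd (h2.trans h3.symm) h
        · rw [h2, h3]; norm_num
        · rw [h2, h3]; norm_num
        · exact absurd (h2.trans h3.symm) h
      have hterm : ∀ (b : Fin n → ℝ), (∀ i, 0 ≤ b i) → ∀ i i',
          0 ≤ (b i * b i') * ((y i * y i') * dotp (x i) (x i')) := by
        intro b hb i i'
        apply mul_nonneg (mul_nonneg (hb i) (hb i'))
        by_cases hyy : y i = y i'
        · rw [hyy1 i i' hyy, one_mul]
          exact (hsep1 i i' hyy).le
        · rw [hyy2 i i' hyy]
          have := hsep2 i i' hyy
          linarith
      have hexpand : ∀ (b : Fin n → ℝ),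
          ∑ ic, (∑ i, b i * (S0 * y i * x i ic)) ^ 2
          = ∑ i, ∑ i', (b i * b i') * ((y i * y i') * dotp (x i) (x i')) := by
        intro b
        have h1 : ∀ ic : Fin d, (∑ i, b i * (S0 * y i * x i ic)) ^ 2
            = ∑ i, ∑ i', (b i * b i') * ((y i * y i') * (x i ic * x i' ic)) * (S0 * S0) := by
          intro ic
          rw [pow_two, Finset.sum_mul_sum]
          exact Finset.sum_congr rfl fun i _ => Finset.sum_congr rfl fun i' _ => by ring
        simp only [h1, hS0sq, mul_one]
        rw [Finset.sum_comm]
        refine Finset.sum_congr rfl fun i _ => ?_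
        rw [Finset.sum_comm]
        refine Finset.sum_congr rfl fun i' _ => ?_
        unfold dotp
        rw [Finset.mul_sum, Finset.mul_sum]
      have hbound : ∀ (b : Fin n → ℝ), (∀ i, 0 ≤ b i) → ∀ i1,
          cmin * (b i1) ^ 2 ≤ ∑ ic, (∑ i, b i * (S0 * y i * x i ic)) ^ 2 := by
        intro b hb i1
        rw [hexpand b]
        have hdiag : cmin * (b i1) ^ 2
            ≤ (b i1 * b i1) * ((y i1 * y i1) * dotp (x i1) (x i1)) := by
          rw [hyy1 i1 i1 rfl, one_mul]
          have hd : dotp (x i1) (x i1) = ∑ ic, (x i1 ic) ^ 2 := by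
            unfold dotp
            exact Finset.sum_congr rfl fun ic _ => (pow_two _).symm
          rw [hd]
          calc cmin * (b i1) ^ 2 ≤ (∑ ic, (x i1 ic) ^ 2) * (b i1) ^ 2 :=
              mul_le_mul_of_nonneg_right (hcmin_le i1) (sq_nonneg _)
            _ = (b i1 * b i1) * (∑ ic, (x i1 ic) ^ 2) := by ring
        calc cmin * (b i1) ^ 2
            ≤ (b i1 * b i1) * ((y i1 * y i1) * dotp (x i1) (x i1)) := hdiag
          _ ≤ ∑ i', (b i1 * b i') * ((y i1 * y i') * dotp (x i1) (x i')) :=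
              Finset.single_le_sum (fun i' _ => hterm b hb i1 i') (Finset.mem_univ i1)
          _ ≤ ∑ i, ∑ i', (b i * b i') * ((y i * y i') * dotp (x i) (x i')) :=
              Finset.single_le_sum
                (fun i _ => Finset.sum_nonneg fun i' _ => hterm b hb i i')
                (Finset.mem_univ i1)
      apply IsSeqClosed.isClosed
      intro vseq v hmem hlim
      simp only [hC, Set.mem_setOf_eq] at hmem ⊢
      have hq : Tendsto (fun m => ∑ ic, (vseq m ic) ^ 2) atTop
          (nhds (∑ ic, (v ic) ^ 2)) := by
        apply tendsto_finset_sum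
        intro ic _
        exact (((continuous_apply ic).tendsto v).comp hlim).pow 2
      obtain ⟨R, hR⟩ := hq.bddAbove_range
      have hRmem : ∀ m, ∑ ic, (vseq m ic) ^ 2 ≤ R := fun m => hR (Set.mem_range_self m)
      choose bs hbs1 hbs2 using hmem
      have hbsle : ∀ m i, bs m i ≤ Real.sqrt (R / cmin) := by
        intro m i
        have h1 := hbound (bs m) (hbs1 m) i
        have h2 : ∑ ic, (∑ i', bs m i' * (S0 * y i' * x i' ic)) ^ 2
            = ∑ ic, (vseq m ic) ^ 2 := by
          refine Finset.sum_congr rfl fun ic _ => ?_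
          rw [← congrFun (hbs2 m) ic]
        rw [h2] at h1
        have h3 : (bs m i) ^ 2 ≤ R / cmin := by
          rw [le_div_iff₀ hcminpos]
          calc (bs m i) ^ 2 * cmin = cmin * (bs m i) ^ 2 := mul_comm _ _
            _ ≤ ∑ ic, (vseq m ic) ^ 2 := h1
            _ ≤ R := hRmem m
        calc bs m i = Real.sqrt ((bs m i) ^ 2) := (Real.sqrt_sq (hbs1 m i)).symm
          _ ≤ Real.sqrt (R / cmin) := Real.sqrt_le_sqrt h3
      have hIcc : ∀ m, bs m ∈ Set.Icc (fun _ => (0:ℝ)) (fun _ => Real.sqrt (R / cmin)) :=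
        fun m => ⟨fun i => hbs1 m i, fun i => hbsle m i⟩
      obtain ⟨blim, hblimmem, φm, hφmono, hφtend⟩ :=
        (isCompact_Icc (a := (fun _ => (0:ℝ) : Fin n → ℝ))
          (b := fun _ => Real.sqrt (R / cmin))).tendsto_subseq hIcc
      refine ⟨blim, fun i => hblimmem.1 i, ?_⟩
      funext ic
      have h1 : Tendsto (fun m => vseq (φm m) ic) atTop (nhds (v ic)) :=
        ((continuous_apply ic).tendsto v).comp (hlim.comp hφmono.tendsto_atTop)
      have h2 : Tendsto (fun m => vseq (φm m) ic) atTop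
          (nhds (∑ i, blim i * (S0 * y i * x i ic))) := by
        have he : ∀ m, vseq (φm m) ic = ∑ i, bs (φm m) i * (S0 * y i * x i ic) :=
          fun m => congrFun (hbs2 (φm m)) ic
        simp only [he]
        apply tendsto_finset_sum
        intro i _
        exact (((continuous_apply i).tendsto blim).comp hφtend).mul tendsto_const_nhds
      exact tendsto_nhds_unique h1 h2
  -- the integral of w' lies in C
  set μt : Measure ℝ := volume.restrict (Set.Ioc (0:ℝ) t) with hμt
  have hμuniv : μt Set.univ = ENNReal.ofReal t := by
    rw [hμt, Measure.restrict_apply_univ, Real.volume_Ioc, sub_zero]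
  haveI : IsFiniteMeasure μt := ⟨by rw [hμuniv]; exact ENNReal.ofReal_lt_top⟩
  haveI : NeZero μt := ⟨by
    rw [← Measure.measure_univ_ne_zero, hμuniv]
    simpa [ENNReal.ofReal_eq_zero] using htpos⟩
  have hcompInt : ∀ ic, Integrable (fun s => w' s j ic) μt :=
    fun ic => (intervalIntegrable_iff_integrableOn_Ioc_of_le ht).1 (hwInt j ic t)
  set F : ℝ → (Fin d → ℝ) := fun s => ∑ ic, (w' s j ic) • (Pi.single ic (1:ℝ) : Fin d → ℝ) with hF
  have hFval : ∀ s, F s = fun ic => w' s j ic := by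
    intro s; funext ic'
    rw [hF]
    simp only [Finset.sum_apply, Pi.smul_apply, smul_eq_mul, Pi.single_apply, mul_ite,
      mul_one, mul_zero]
    simp
  have hFint : Integrable F μt :=
    integrable_finset_sum _ fun ic _ => (hcompInt ic).smul_const _
  have hFmem : ∀ᵐ s ∂μt, F s ∈ C := by
    have hsub : Set.Ioc (0:ℝ) t ⊆ Set.Ici (0:ℝ) := fun s hs => le_of_lt hs.1
    rw [hμt]
    filter_upwards [ae_restrict_of_ae_restrict_of_subset hsub hODE,
      ae_restrict_mem measurableSet_Ioc] with s hσ hs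
    obtain ⟨σ, hσ01, hσ0, hσ1, hw', ha'⟩ := hσ
    have hs0 : (0:ℝ) ≤ s := le_of_lt hs.1
    simp only [hC, Set.mem_setOf_eq]
    refine ⟨fun i => (-(L (y i * net (w s) (a s) (x i)))) * (S0 * a s j) * σ i j,
      fun i => mul_nonneg (mul_nonneg (neg_nonneg.2 (hLnp _)) (hpos s hs0).le)
        (hσ01 i j).1, ?_⟩
    rw [hFval s]
    funext ic
    rw [hw' j ic]
    simp only [hLd]
    rw [← Finset.sum_neg_distrib]
    refine Finset.sum_congr rfl fun i _ => ?_
    linear_combination (L (y i * net (w s) (a s) (x i)) * y i * a s j * σ i j * x i ic)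
      * hS0sq
  have havg := hCconv.average_mem hCclosed hFmem hFint
  rw [average_eq] at havg
  have htoReal : μt.real Set.univ = t := by rw [measureReal_def, hμuniv, ENNReal.toReal_ofReal ht]
  rw [htoReal] at havg
  obtain ⟨b0, hb0nn, hb0eq⟩ := havg
  refine ⟨fun i => t * b0 i, fun i => mul_nonneg ht (hb0nn i), ?_⟩
  intro ic
  have hintF : (∫ s, F s ∂μt) ic = ∫ s, w' s j ic ∂μt := by
    rw [hF, integral_finset_sum _ (fun ic' _ => (hcompInt ic').smul_const _)]
    rw [Finset.sum_apply]
    simp only [integral_smul_const, Pi.smul_apply, smul_eq_mul, Pi.single_apply, mul_ite,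
      mul_one, mul_zero]
    simp
  have h2 := congrFun hb0eq ic
  rw [Pi.smul_apply, smul_eq_mul, hintF] at h2
  have hw : w t j ic - w 0 j ic = ∫ s, w' s j ic ∂μt := by
    rw [hwFTC t j ic]
    have : (∫ s in (0:ℝ)..t, w' s j ic) = ∫ s, w' s j ic ∂μt :=
      intervalIntegral.integral_of_le ht
    rw [← this]; ring
  calc w t j ic - w 0 j ic = ∫ s, w' s j ic ∂μt := hw
    _ = t * (t⁻¹ * ∫ s, w' s j ic ∂μt) := by
        rw [← mul_assoc, mul_inv_cancel₀ htpos.ne', one_mul]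
    _ = t * (∑ i, b0 i * (S0 * y i * x i ic)) := by rw [h2]
    _ = ∑ i, (t * b0 i) * (S0 * y i * x i ic) := by
        rw [Finset.mul_sum]
        exact Finset.sum_congr rfl fun i _ => by ring
end

section
/- For a gradient-flow trajectory of a two-layer ReLU network on an orthogonally separable dataset, starting from a balanced and live initialisation, with either the exponential or the logistic loss: for all i ∈ [n] and j ∈ [k], the function t ↦ sgn(a_j)·y_i·(w_j(t)^T x_i) is nondecreasing on [0,∞) (its derivative is ≥ 0 for almost every t). -/
open MeasureTheory Filter Finset

/- ### Auxiliary lemmas -/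

lemma fubini_triangle (f g : ℝ → ℝ) (a b : ℝ)
    (hf : IntegrableOn f (Set.Ioc a b)) (hg : IntegrableOn g (Set.Ioc a b)) :
    (∫ τ in Set.Ioc a b, f τ * ∫ σ in Set.Ioc a τ, g σ)
      + (∫ σ in Set.Ioc a b, g σ * ∫ τ in Set.Ioc a σ, f τ)
      = (∫ τ in Set.Ioc a b, f τ) * (∫ σ in Set.Ioc a b, g σ) := by
  set μ := volume.restrict (Set.Ioc a b) with hμ
  have hH : Integrable (fun p : ℝ × ℝ => f p.1 * g p.2) (μ.prod μ) := hf.mul_prod hg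
  set s : Set (ℝ × ℝ) := {p : ℝ × ℝ | p.2 ≤ p.1} with hsdef
  have hs : MeasurableSet s := measurableSet_le measurable_snd measurable_fst
  have h1 : Integrable (s.indicator (fun p : ℝ × ℝ => f p.1 * g p.2)) (μ.prod μ) :=
    hH.indicator hs
  have h2 : Integrable (sᶜ.indicator (fun p : ℝ × ℝ => f p.1 * g p.2)) (μ.prod μ) :=
    hH.indicator hs.compl
  have hsplit : (∫ p, s.indicator (fun p : ℝ × ℝ => f p.1 * g p.2) p ∂(μ.prod μ))
        + (∫ p, sᶜ.indicator (fun p : ℝ × ℝ => f p.1 * g p.2) p ∂(μ.prod μ))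
      = ∫ p : ℝ × ℝ, f p.1 * g p.2 ∂(μ.prod μ) := by
    rw [← integral_add h1 h2]
    apply integral_congr_ae
    filter_upwards with p
    by_cases hp : p ∈ s
    · simp [Set.indicator_of_mem hp, Set.indicator_of_notMem (by simpa using hp : p ∉ sᶜ)]
    · simp [Set.indicator_of_notMem hp, Set.indicator_of_mem (by simpa using hp : p ∈ sᶜ)]
  have hterm1 : (∫ p, s.indicator (fun p : ℝ × ℝ => f p.1 * g p.2) p ∂(μ.prod μ))
      = ∫ τ in Set.Ioc a b, f τ * ∫ σ in Set.Ioc a τ, g σ := by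
    rw [integral_prod _ h1]
    apply setIntegral_congr_fun measurableSet_Ioc
    intro τ hτ
    have : ∀ σ : ℝ, s.indicator (fun p : ℝ × ℝ => f p.1 * g p.2) (τ, σ)
        = (Set.Iic τ).indicator (fun σ => f τ * g σ) σ := by
      intro σ
      by_cases hσ : σ ≤ τ
      · rw [Set.indicator_of_mem (by exact hσ : (τ, σ) ∈ s),
          Set.indicator_of_mem (by exact hσ)]
      · rw [Set.indicator_of_notMem (by exact hσ : ¬ ((τ, σ) ∈ s)),
          Set.indicator_of_notMem (by exact hσ)]
    simp only [this]
    rw [integral_indicator measurableSet_Iic, hμ,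
      Measure.restrict_restrict measurableSet_Iic]
    have hset : Set.Iic τ ∩ Set.Ioc a b = Set.Ioc a τ := by
      ext z
      simp only [Set.mem_inter_iff, Set.mem_Iic, Set.mem_Ioc]
      exact ⟨fun ⟨h1', h2', _⟩ => ⟨h2', h1'⟩, fun ⟨h1', h2'⟩ => ⟨h2', h1', h2'.trans hτ.2⟩⟩
    rw [hset, MeasureTheory.integral_const_mul]
  have hterm2 : (∫ p, sᶜ.indicator (fun p : ℝ × ℝ => f p.1 * g p.2) p ∂(μ.prod μ))
      = ∫ σ in Set.Ioc a b, g σ * ∫ τ in Set.Ioc a σ, f τ := by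
    rw [integral_prod_symm _ h2]
    apply setIntegral_congr_fun measurableSet_Ioc
    intro σ hσ
    have : ∀ τ : ℝ, sᶜ.indicator (fun p : ℝ × ℝ => f p.1 * g p.2) (τ, σ)
        = (Set.Iio σ).indicator (fun τ => f τ * g σ) τ := by
      intro τ
      by_cases hτ : τ < σ
      · rw [Set.indicator_of_mem (by simpa [hsdef] using hτ.not_ge : (τ, σ) ∈ sᶜ),
          Set.indicator_of_mem (by exact hτ)]
      · rw [Set.indicator_of_notMem (by simpa [hsdef] using not_lt.mp hτ),
          Set.indicator_of_notMem (by exact hτ)]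
    simp only [this]
    rw [integral_indicator measurableSet_Iio, hμ,
      Measure.restrict_restrict measurableSet_Iio]
    have hset : Set.Iio σ ∩ Set.Ioc a b = Set.Ioo a σ := by
      ext z
      simp only [Set.mem_inter_iff, Set.mem_Iio, Set.mem_Ioc, Set.mem_Ioo]
      exact ⟨fun ⟨h1', h2', _⟩ => ⟨h2', h1'⟩, fun ⟨h1', h2'⟩ => ⟨h2', h1', (le_of_lt h2').trans hσ.2⟩⟩
    rw [hset, MeasureTheory.integral_mul_const, ← integral_Ioc_eq_integral_Ioo, mul_comm]
  rw [hterm1, hterm2] at hsplit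
  rw [hsplit, integral_prod_mul]

lemma intInt_all {f : ℝ → ℝ} (h : ∀ t, IntervalIntegrable f volume 0 t) :
    ∀ a b : ℝ, IntervalIntegrable f volume a b :=
  fun a b => ((h a).symm.trans (h b))

lemma intInt_sum {ι : Type*} (s : Finset ι) {f : ι → ℝ → ℝ} {a b : ℝ}
    (h : ∀ i ∈ s, IntervalIntegrable (f i) volume a b) :
    IntervalIntegrable (fun t => ∑ i ∈ s, f i t) volume a b := by
  have h2 := IntervalIntegrable.sum s h
  have h3 : (∑ i ∈ s, f i) = fun t => ∑ i ∈ s, f i t := by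
    funext t; simp
  rwa [h3] at h2

lemma prim_diff {u u' : ℝ → ℝ} (hu' : ∀ t, IntervalIntegrable u' volume 0 t)
    (hu : ∀ t, u t = u 0 + ∫ s in (0:ℝ)..t, u' s) (c d : ℝ) :
    u d - u c = ∫ τ in c..d, u' τ := by
  have h := intervalIntegral.integral_add_adjacent_intervals (f := u')
    (μ := volume) (a := 0) (b := c) (c := d) (hu' c) (intInt_all hu' c d)
  rw [hu d, hu c]
  linarith [h]

lemma prim_cont {u u' : ℝ → ℝ} (hu' : ∀ t, IntervalIntegrable u' volume 0 t)
    (hu : ∀ t, u t = u 0 + ∫ s in (0:ℝ)..t, u' s) : Continuous u := by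
  have : Continuous fun t => u 0 + ∫ s in (0:ℝ)..t, u' s :=
    continuous_const.add (intervalIntegral.continuous_primitive (intInt_all hu') 0)
  exact this.congr (fun t => (hu t).symm)

lemma prod_ftc {u v u' v' : ℝ → ℝ}
    (hu' : ∀ t, IntervalIntegrable u' volume 0 t)
    (hv' : ∀ t, IntervalIntegrable v' volume 0 t)
    (hu : ∀ t, u t = u 0 + ∫ s in (0:ℝ)..t, u' s)
    (hv : ∀ t, v t = v 0 + ∫ s in (0:ℝ)..t, v' s)
    {a b : ℝ} (hab : a ≤ b) :
    u b * v b - u a * v a = ∫ τ in a..b, (u' τ * v τ + v' τ * u τ) := by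
  have hcu : Continuous u := prim_cont hu' hu
  have hcv : Continuous v := prim_cont hv' hv
  have huab := intInt_all hu' a b
  have hvab := intInt_all hv' a b
  have i1a : IntervalIntegrable (fun τ => u' τ * v a) volume a b := huab.mul_const _
  have i2a : IntervalIntegrable (fun τ => v' τ * u a) volume a b := hvab.mul_const _
  have i1b : IntervalIntegrable (fun τ => u' τ * ∫ σ in a..τ, v' σ) volume a b :=
    huab.mul_continuousOn (intervalIntegral.continuous_primitive (intInt_all hv') a).continuousOn
  have i2b : IntervalIntegrable (fun τ => v' τ * ∫ σ in a..τ, u' σ) volume a b :=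
    hvab.mul_continuousOn (intervalIntegral.continuous_primitive (intInt_all hu') a).continuousOn
  have hsplit : ∀ τ : ℝ, u' τ * v τ + v' τ * u τ
      = (u' τ * v a + v' τ * u a)
        + (u' τ * (∫ σ in a..τ, v' σ) + v' τ * (∫ σ in a..τ, u' σ)) := by
    intro τ
    have h1 : v τ = v a + ∫ σ in a..τ, v' σ := by
      have := prim_diff hv' hv a τ; linarith
    have h2 : u τ = u a + ∫ σ in a..τ, u' σ := by
      have := prim_diff hu' hu a τ; linarith
    rw [h1, h2]; ring
  calc u b * v b - u a * v a
      = (u b - u a) * v a + (v b - v a) * u a + (u b - u a) * (v b - v a) := by ring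
    _ = ∫ τ in a..b, (u' τ * v τ + v' τ * u τ) := by
        rw [prim_diff hu' hu a b, prim_diff hv' hv a b]
        have key : (∫ τ in a..b, u' τ * (∫ σ in a..τ, v' σ))
            + (∫ τ in a..b, v' τ * (∫ σ in a..τ, u' σ))
            = (∫ τ in a..b, u' τ) * (∫ τ in a..b, v' τ) := by
          have e1 : (∫ τ in a..b, u' τ * (∫ σ in a..τ, v' σ))
              = ∫ τ in Set.Ioc a b, u' τ * (∫ σ in Set.Ioc a τ, v' σ) := by
            rw [intervalIntegral.integral_of_le hab]
            apply setIntegral_congr_fun measurableSet_Ioc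
            intro τ hτ
            dsimp only
            rw [intervalIntegral.integral_of_le hτ.1.le]
          have e2 : (∫ τ in a..b, v' τ * (∫ σ in a..τ, u' σ))
              = ∫ τ in Set.Ioc a b, v' τ * (∫ σ in Set.Ioc a τ, u' σ) := by
            rw [intervalIntegral.integral_of_le hab]
            apply setIntegral_congr_fun measurableSet_Ioc
            intro τ hτ
            dsimp only
            rw [intervalIntegral.integral_of_le hτ.1.le]
          rw [e1, e2, intervalIntegral.integral_of_le hab,
            intervalIntegral.integral_of_le hab]
          exact fubini_triangle u' v' a b huab.1 hvab.1
        rw [intervalIntegral.integral_congr (g := fun τ => (u' τ * v a + v' τ * u a)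
          + (u' τ * (∫ σ in a..τ, v' σ) + v' τ * (∫ σ in a..τ, u' σ)))
          (fun τ _ => hsplit τ)]
        rw [intervalIntegral.integral_add (i1a.add i2a) (i1b.add i2b),
          intervalIntegral.integral_add i1a i2a,
          intervalIntegral.integral_add i1b i2b,
          intervalIntegral.integral_mul_const, intervalIntegral.integral_mul_const, key]

lemma prod_ftc_all {u v u' v' : ℝ → ℝ}
    (hu' : ∀ t, IntervalIntegrable u' volume 0 t)
    (hv' : ∀ t, IntervalIntegrable v' volume 0 t)
    (hu : ∀ t, u t = u 0 + ∫ s in (0:ℝ)..t, u' s)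
    (hv : ∀ t, v t = v 0 + ∫ s in (0:ℝ)..t, v' s) (t : ℝ) :
    u t * v t = u 0 * v 0 + ∫ τ in (0:ℝ)..t, (u' τ * v τ + v' τ * u τ) := by
  rcases le_total 0 t with h | h
  · have := prod_ftc hu' hv' hu hv h; linarith
  · have h1 := prod_ftc hu' hv' hu hv h
    have h2 := intervalIntegral.integral_symm (μ := volume) (a := t) (b := (0:ℝ))
      (f := fun τ => u' τ * v τ + v' τ * u τ)
    linarith

lemma energy_ftc {d : ℕ} {A A' : ℝ → ℝ} {W W' : ℝ → Fin d → ℝ}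
    (hA' : ∀ t, IntervalIntegrable A' volume 0 t)
    (hW' : ∀ c, ∀ t, IntervalIntegrable (fun s => W' s c) volume 0 t)
    (hA : ∀ t, A t = A 0 + ∫ s in (0:ℝ)..t, A' s)
    (hW : ∀ t c, W t c = W 0 c + ∫ s in (0:ℝ)..t, W' s c) (t : ℝ) :
    ((A t * A t + ∑ c, W t c * W t c)
      = (A 0 * A 0 + ∑ c, W 0 c * W 0 c)
        + ∫ s in (0:ℝ)..t, ((A' s * A s + A' s * A s)
            + ∑ c, (W' s c * W s c + W' s c * W s c)))
    ∧ ((A t * A t - ∑ c, W t c * W t c)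
      = (A 0 * A 0 - ∑ c, W 0 c * W 0 c)
        + ∫ s in (0:ℝ)..t, ((A' s * A s + A' s * A s)
            - ∑ c, (W' s c * W s c + W' s c * W s c))) := by
  have hAc : Continuous A := prim_cont hA' hA
  have hWc : ∀ c, Continuous (fun t => W t c) := fun c => prim_cont (hW' c) (fun r => hW r c)
  have haaInt : ∀ r : ℝ, IntervalIntegrable (fun s => A' s * A s + A' s * A s) volume 0 r :=
    fun r => ((hA' r).mul_continuousOn hAc.continuousOn).add
      ((hA' r).mul_continuousOn hAc.continuousOn)
  have hwwInt : ∀ c, ∀ r : ℝ,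
      IntervalIntegrable (fun s => W' s c * W s c + W' s c * W s c) volume 0 r :=
    fun c r => ((hW' c r).mul_continuousOn (hWc c).continuousOn).add
      ((hW' c r).mul_continuousOn (hWc c).continuousOn)
  have haa := prod_ftc_all hA' hA' hA hA t
  have hww : ∀ c, W t c * W t c
      = W 0 c * W 0 c + ∫ s in (0:ℝ)..t, (W' s c * W s c + W' s c * W s c) :=
    fun c => prod_ftc_all (hW' c) (hW' c) (fun r => hW r c) (fun r => hW r c) t
  have hsum : (∑ c, W t c * W t c) = (∑ c, W 0 c * W 0 c)
      + ∫ s in (0:ℝ)..t, ∑ c, (W' s c * W s c + W' s c * W s c) := by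
    rw [intervalIntegral.integral_finset_sum (fun c _ => hwwInt c t)]
    calc (∑ c, W t c * W t c)
        = ∑ c, (W 0 c * W 0 c + ∫ s in (0:ℝ)..t, (W' s c * W s c + W' s c * W s c)) :=
          Finset.sum_congr rfl fun c _ => hww c
      _ = _ := Finset.sum_add_distrib
  constructor
  · rw [intervalIntegral.integral_add (haaInt t) (intInt_sum _ (fun c _ => hwwInt c t))]
    linarith [haa, hsum]
  · rw [intervalIntegral.integral_sub (haaInt t) (intInt_sum _ (fun c _ => hwwInt c t))]
    linarith [haa, hsum]

lemma gronwall_pos {S S' : ℝ → ℝ} {C T : ℝ} (hC : 0 ≤ C) (hT : 0 ≤ T)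
    (hS'int : ∀ t, IntervalIntegrable S' volume 0 t)
    (hftc : ∀ t, S t = S 0 + ∫ s in (0:ℝ)..t, S' s)
    (hSnn : ∀ t, 0 ≤ S t)
    (hbound : ∀ᵐ s ∂(volume.restrict (Set.Icc 0 T)), |S' s| ≤ C * S s)
    (hS0 : 0 < S 0) : ∀ t ∈ Set.Icc (0:ℝ) T, 0 < S t := by
  have hcont : Continuous S := prim_cont hS'int hftc
  by_contra hcon
  push_neg at hcon
  obtain ⟨t₀, ht₀, hSt₀'⟩ := hcon
  have hSt₀ : S t₀ = 0 := le_antisymm hSt₀' (hSnn t₀)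
  obtain ⟨z, hz, hmax'⟩ := isCompact_Icc.exists_isMaxOn (Set.nonempty_Icc.mpr hT)
    (hcont.continuousOn (s := Set.Icc 0 T))
  set M := S z with hM
  have hmax : ∀ u ∈ Set.Icc (0:ℝ) T, S u ≤ M := fun u hu => hmax' hu
  have hMpos : 0 < M := lt_of_lt_of_le hS0 (hmax 0 (Set.mem_Icc.mpr ⟨le_refl _, hT⟩))
  have hkey : ∀ s ∈ Set.Icc 0 t₀, S s ≤ C * ∫ u in s..t₀, S u := by
    intro s hs
    have hst : s ≤ t₀ := hs.2
    have h1 : S t₀ - S s = ∫ u in s..t₀, S' u := prim_diff hS'int hftc s t₀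
    have h2 : (∫ u in s..t₀, S' u) ≥ - ∫ u in s..t₀, |S' u| := by
      rw [← intervalIntegral.integral_neg]
      apply intervalIntegral.integral_mono_on hst
        ((intInt_all hS'int s t₀).abs.neg) (intInt_all hS'int s t₀)
      intro u _; exact neg_abs_le _
    have h3 : (∫ u in s..t₀, |S' u|) ≤ ∫ u in s..t₀, C * S u := by
      apply intervalIntegral.integral_mono_ae_restrict hst
        (intInt_all hS'int s t₀).abs
        ((hcont.intervalIntegrable s t₀).const_mul C)
      have hsub : Set.Icc s t₀ ⊆ Set.Icc 0 T := Set.Icc_subset_Icc hs.1 (ht₀.2)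
      exact ae_restrict_of_ae_restrict_of_subset hsub hbound
    rw [intervalIntegral.integral_const_mul] at h3
    linarith
  have hind : ∀ m : ℕ, ∀ s ∈ Set.Icc 0 t₀, S s ≤ M * (C * (t₀ - s)) ^ m / m.factorial := by
    intro m
    induction m with
    | zero =>
      intro s hs
      simpa using hmax s (Set.mem_Icc.mpr ⟨hs.1, hs.2.trans ht₀.2⟩)
    | succ m ih =>
      intro s hs
      have hst : s ≤ t₀ := hs.2
      have hstep : (∫ u in s..t₀, S u)
          ≤ ∫ u in s..t₀, (M * C ^ m / m.factorial) * (t₀ - u) ^ m := by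
        apply intervalIntegral.integral_mono_on hst (hcont.intervalIntegrable s t₀)
          (Continuous.intervalIntegrable
            (continuous_const.mul ((continuous_const.sub continuous_id).pow m)) s t₀)
        intro u hu
        have := ih u ⟨hs.1.trans hu.1, hu.2⟩
        calc S u ≤ M * (C * (t₀ - u)) ^ m / m.factorial := this
          _ = (M * C ^ m / m.factorial) * (t₀ - u) ^ m := by rw [mul_pow]; ring
      have hcomp : (∫ u in s..t₀, (t₀ - u) ^ m) = (t₀ - s) ^ (m + 1) / (m + 1) := by
        rw [intervalIntegral.integral_comp_sub_left (fun v => v ^ m) t₀]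
        simp [integral_pow]
      have hintc : (∫ u in s..t₀, (M * C ^ m / m.factorial) * (t₀ - u) ^ m)
          = (M * C ^ m / m.factorial) * ((t₀ - s) ^ (m + 1) / (m + 1)) := by
        rw [intervalIntegral.integral_const_mul, hcomp]
      have h0 := hkey s hs
      have hfac : (m.factorial : ℝ) ≠ 0 := Nat.cast_ne_zero.mpr m.factorial_ne_zero
      have hCineq : C * (∫ u in s..t₀, S u)
          ≤ C * ((M * C ^ m / m.factorial) * ((t₀ - s) ^ (m + 1) / (m + 1))) := by
        apply mul_le_mul_of_nonneg_left _ hC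
        rw [← hintc]; exact hstep
      have heq : C * ((M * C ^ m / m.factorial) * ((t₀ - s) ^ (m + 1) / (m + 1)))
          = M * (C * (t₀ - s)) ^ (m + 1) / (m + 1).factorial := by
        rw [mul_pow, Nat.factorial_succ]
        push_cast
        field_simp
        ring
      linarith [h0]
  have htend : Filter.Tendsto (fun m : ℕ => M * (C * t₀) ^ m / m.factorial)
      Filter.atTop (nhds 0) := by
    have h := FloorSemiring.tendsto_pow_div_factorial_atTop (K := ℝ) (C * t₀)
    have := h.const_mul M
    simpa [mul_div_assoc] using this
  have hle : S 0 ≤ 0 := by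
    apply ge_of_tendsto htend
    filter_upwards with m
    simpa using hind m 0 (Set.mem_Icc.mpr ⟨le_refl _, ht₀.1⟩)
  linarith

/-- for all `i` and `j`, the function `t ↦ sgn(a_j) y_i (w_j(t)ᵀ x_i)` is nondecreasing on `[0, ∞)`. -/
theorem gradient_flow_inner_products_monotone
    (d n k : ℕ) (x : Fin n → Fin d → ℝ) (y : Fin n → ℝ)
    (hy : ∀ i, y i = 1 ∨ y i = -1)
    (hsep1 : ∀ i i', y i = y i' → 0 < dotp (x i) (x i'))
    (hsep2 : ∀ i i', y i ≠ y i' → dotp (x i) (x i') ≤ 0)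
    (ℓ : ℝ → ℝ)
    (hℓ : (ℓ = fun u => Real.exp (-u)) ∨ (ℓ = fun u => Real.log (1 + Real.exp (-u))))
    (w : ℝ → Fin k → Fin d → ℝ) (a : ℝ → Fin k → ℝ)
    (w' : ℝ → Fin k → Fin d → ℝ) (a' : ℝ → Fin k → ℝ)
    (hwInt : ∀ (j : Fin k) (i : Fin d) (t : ℝ),
      IntervalIntegrable (fun s => w' s j i) volume 0 t)
    (haInt : ∀ (j : Fin k) (t : ℝ), IntervalIntegrable (fun s => a' s j) volume 0 t)
    (hwFTC : ∀ (t : ℝ) (j : Fin k) (i : Fin d),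
      w t j i = w 0 j i + ∫ s in (0:ℝ)..t, w' s j i)
    (haFTC : ∀ (t : ℝ) (j : Fin k), a t j = a 0 j + ∫ s in (0:ℝ)..t, a' s j)
    (hODE : ∀ᵐ t ∂(volume.restrict (Set.Ici (0:ℝ))),
      ∃ σ : Fin n → Fin k → ℝ,
        (∀ i j, 0 ≤ σ i j ∧ σ i j ≤ 1) ∧
        (∀ i j, dotp (w t j) (x i) < 0 → σ i j = 0) ∧
        (∀ i j, 0 < dotp (w t j) (x i) → σ i j = 1) ∧
        (∀ j ic, w' t j ic =
          -∑ i, deriv ℓ (y i * net (w t) (a t) (x i)) * y i * a t j * σ i j * x i ic) ∧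
        (∀ j, a' t j =
          -∑ i, deriv ℓ (y i * net (w t) (a t) (x i)) * y i * relu (dotp (w t j) (x i))))
    (hbal : ∀ j, |a 0 j| = norm2 (w 0 j) ∧ a 0 j ≠ 0)
    (hlive : ∀ s : ℝ, s = 1 ∨ s = -1 →
      ∃ i j, y i = s ∧ 0 < y i * a 0 j * relu (dotp (w 0 j) (x i))) :
    ∀ (i : Fin n) (j : Fin k),
      MonotoneOn (fun t => Real.sign (a 0 j) * y i * dotp (w t j) (x i)) (Set.Ici (0:ℝ)) := by
  -- facts about the loss derivative
  have hℓd : (∀ u : ℝ, deriv ℓ u < 0) ∧ Continuous (deriv ℓ) := by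
    rcases hℓ with h | h
    · have hd : ∀ u : ℝ, HasDerivAt ℓ (-Real.exp (-u)) u := by
        intro u
        rw [h]
        have := (Real.hasDerivAt_exp (-u)).comp u ((hasDerivAt_id u).neg)
        simpa [Function.comp_def] using this
      have he : deriv ℓ = fun u => -Real.exp (-u) := funext fun u => (hd u).deriv
      exact ⟨fun u => by rw [he]; simpa using Real.exp_pos (-u),
        by rw [he]; exact (Real.continuous_exp.comp continuous_neg).neg⟩
    · have hd : ∀ u : ℝ, HasDerivAt ℓ (-Real.exp (-u) / (1 + Real.exp (-u))) u := by
        intro u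
        rw [h]
        have h1 : HasDerivAt (fun v : ℝ => 1 + Real.exp (-v)) (-Real.exp (-u)) u := by
          have := ((Real.hasDerivAt_exp (-u)).comp u ((hasDerivAt_id u).neg)).const_add 1
          simpa using this
        exact h1.log (by positivity)
      have he : deriv ℓ = fun u => -Real.exp (-u) / (1 + Real.exp (-u)) :=
        funext fun u => (hd u).deriv
      constructor
      · intro u; rw [he]
        apply div_neg_of_neg_of_pos
        · simpa using Real.exp_pos (-u)
        · positivity
      · rw [he]
        exact ((Real.continuous_exp.comp continuous_neg).neg).div
          (continuous_const.add (Real.continuous_exp.comp continuous_neg))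
          (fun u => by positivity)
  -- misc facts
  have dotp_comm : ∀ {m : ℕ} (u v : Fin m → ℝ), dotp u v = dotp v u := by
    intro m u v; unfold dotp; exact Finset.sum_congr rfl fun c _ => mul_comm _ _
  have relu_nonneg : ∀ u : ℝ, 0 ≤ relu u := fun u => le_max_right _ _
  have relu_le_abs : ∀ u : ℝ, relu u ≤ |u| := fun u => max_le (le_abs_self u) (abs_nonneg u)
  have hyabs : ∀ i, |y i| = 1 := fun i => by rcases hy i with h | h <;> rw [h] <;> norm_num
  -- continuity facts
  have hwc : ∀ j c, Continuous fun t => w t j c := fun j c =>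
    prim_cont (hwInt j c) (fun t => hwFTC t j c)
  have hac : ∀ j, Continuous fun t => a t j := fun j =>
    prim_cont (haInt j) (fun t => haFTC t j)
  have hdotc : ∀ j i, Continuous fun t => dotp (w t j) (x i) := by
    intro j i; unfold dotp
    exact continuous_finset_sum _ fun c _ => (hwc j c).mul continuous_const
  have hdℓc : ∀ i, Continuous fun t => deriv ℓ (y i * net (w t) (a t) (x i)) := by
    intro i
    apply hℓd.2.comp
    apply continuous_const.mul
    unfold net relu
    exact continuous_finset_sum _ fun j' _ => (hac j').mul ((hdotc j' i).max continuous_const)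
  -- swap lemma
  have hswap : ∀ (F : Fin n → ℝ) (v : Fin d → ℝ),
      (∑ c, (∑ i', F i' * x i' c) * v c) = ∑ i', F i' * dotp (x i') v := by
    intro F v
    unfold dotp
    calc ∑ c, (∑ i', F i' * x i' c) * v c = ∑ c, ∑ i', F i' * (x i' c * v c) := by
          refine Finset.sum_congr rfl fun c _ => ?_
          rw [Finset.sum_mul]; exact Finset.sum_congr rfl fun i' _ => by ring
      _ = ∑ i', ∑ c, F i' * (x i' c * v c) := Finset.sum_comm
      _ = ∑ i', F i' * ∑ c, x i' c * v c := by
          exact Finset.sum_congr rfl fun i' _ => (Finset.mul_sum _ _ _).symm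
  intro i j
  -- energy identities
  have hEftc := fun t => energy_ftc (A := fun t => a t j) (A' := fun t => a' t j)
    (W := fun t => w t j) (W' := fun t => w' t j)
    (haInt j) (fun c => hwInt j c) (fun t => haFTC t j) (fun t c => hwFTC t j c) t
  -- a.e. facts
  have hae : ∀ᵐ s ∂(volume.restrict (Set.Ici (0:ℝ))),
      ((∑ c, w' s j c * w s j c) = a' s j * a s j) ∧
      |(a' s j * a s j + a' s j * a s j) + ∑ c, (w' s j c * w s j c + w' s j c * w s j c)|
        ≤ (2 * ∑ i', (-(deriv ℓ (y i' * net (w s) (a s) (x i')))) * (∑ c, |x i' c|))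
          * (a s j * a s j + ∑ c, w s j c * w s j c) := by
    filter_upwards [hODE] with s hs
    obtain ⟨σ, hσ01, hσ0, hσ1, hw', ha'⟩ := hs
    have hσdot : ∀ i', σ i' j * dotp (w s j) (x i') = relu (dotp (w s j) (x i')) := by
      intro i'
      rcases lt_trichotomy (dotp (w s j) (x i')) 0 with h | h | h
      · rw [hσ0 i' j h]; unfold relu; rw [max_eq_right h.le]; ring
      · rw [h]; unfold relu; simp
      · rw [hσ1 i' j h]; unfold relu; rw [max_eq_left h.le]; ring
    have key : (∑ c, w' s j c * w s j c) = a' s j * a s j := by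
      have e1 : (∑ c, w' s j c * w s j c)
          = ∑ c, (∑ i', (-(deriv ℓ (y i' * net (w s) (a s) (x i'))
              * y i' * a s j * σ i' j)) * x i' c) * w s j c := by
        refine Finset.sum_congr rfl fun c _ => ?_
        rw [hw' j c, ← Finset.sum_neg_distrib]
        congr 1
        exact Finset.sum_congr rfl fun i' _ => by ring
      rw [e1, hswap]
      have e4 : a' s j * a s j
          = ∑ i', (-(deriv ℓ (y i' * net (w s) (a s) (x i')) * y i'))
              * (a s j * relu (dotp (w s j) (x i'))) := by
        rw [ha' j, neg_mul, Finset.sum_mul, ← Finset.sum_neg_distrib]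
        exact Finset.sum_congr rfl fun i' _ => by ring
      rw [e4]
      refine Finset.sum_congr rfl fun i' _ => ?_
      rw [← hσdot i', dotp_comm (x i') (w s j)]
      ring
    constructor
    · exact key
    · have e5 : (a' s j * a s j + a' s j * a s j)
          + ∑ c, (w' s j c * w s j c + w' s j c * w s j c)
          = 4 * (a' s j * a s j) := by
        rw [Finset.sum_add_distrib, key]; ring
      rw [e5]
      have e4 : a' s j * a s j
          = ∑ i', (-(deriv ℓ (y i' * net (w s) (a s) (x i')) * y i'))
              * (a s j * relu (dotp (w s j) (x i'))) := by
        rw [ha' j, neg_mul, Finset.sum_mul, ← Finset.sum_neg_distrib]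
        exact Finset.sum_congr rfl fun i' _ => by ring
      set Ss := a s j * a s j + ∑ c, w s j c * w s j c with hSs
      have hSsnn : 0 ≤ Ss := by
        apply add_nonneg (mul_self_nonneg _)
        exact Finset.sum_nonneg fun c _ => mul_self_nonneg _
      have hterm : ∀ i', |(-(deriv ℓ (y i' * net (w s) (a s) (x i')) * y i'))
            * (a s j * relu (dotp (w s j) (x i')))|
          ≤ (-(deriv ℓ (y i' * net (w s) (a s) (x i')))) * ((∑ c, |x i' c|) * (Ss / 2)) := by
        intro i'
        have hdlneg := hℓd.1 (y i' * net (w s) (a s) (x i'))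
        have habs : |(-(deriv ℓ (y i' * net (w s) (a s) (x i')) * y i'))
              * (a s j * relu (dotp (w s j) (x i')))|
            = (-(deriv ℓ (y i' * net (w s) (a s) (x i'))))
              * (|a s j| * relu (dotp (w s j) (x i'))) := by
          rw [abs_mul, abs_neg, abs_mul, hyabs i', abs_mul,
            abs_of_neg hdlneg, abs_of_nonneg (relu_nonneg _)]
          ring
        rw [habs]
        apply mul_le_mul_of_nonneg_left _ (by linarith)
        -- |a| * relu(dot) ≤ K i' * (Ss/2)
        have h1 : relu (dotp (w s j) (x i')) ≤ ∑ c, |w s j c| * |x i' c| := by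
          refine (relu_le_abs _).trans ?_
          unfold dotp
          refine (Finset.abs_sum_le_sum_abs _ _).trans ?_
          exact Finset.sum_congr rfl (fun c _ => abs_mul _ _) |>.le
        have h2 : ∀ c, |w s j c| * |a s j| ≤ Ss / 2 := by
          intro c
          have hle : w s j c * w s j c ≤ ∑ c', w s j c' * w s j c' :=
            Finset.single_le_sum (f := fun c' => w s j c' * w s j c')
              (fun c' _ => mul_self_nonneg _) (Finset.mem_univ c)
          have e : |w s j c| * |a s j| ≤ (w s j c * w s j c + a s j * a s j) / 2 := by
            nlinarith [sq_nonneg (|w s j c| - |a s j|), abs_mul_abs_self (w s j c),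
              abs_mul_abs_self (a s j)]
          rw [hSs]
          linarith [hle, e]
        calc |a s j| * relu (dotp (w s j) (x i'))
            ≤ |a s j| * ∑ c, |w s j c| * |x i' c| :=
              mul_le_mul_of_nonneg_left h1 (abs_nonneg _)
          _ = ∑ c, (|w s j c| * |a s j|) * |x i' c| := by
              rw [Finset.mul_sum]; exact Finset.sum_congr rfl fun c _ => by ring
          _ ≤ ∑ c, (Ss / 2) * |x i' c| := by
              refine Finset.sum_le_sum fun c _ => ?_
              exact mul_le_mul_of_nonneg_right (h2 c) (abs_nonneg _)
          _ = (∑ c, |x i' c|) * (Ss / 2) := by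
              rw [Finset.sum_mul]; exact Finset.sum_congr rfl fun c _ => by ring
      have hsumabs : |a' s j * a s j|
          ≤ ∑ i', (-(deriv ℓ (y i' * net (w s) (a s) (x i')))) * ((∑ c, |x i' c|) * (Ss / 2)) := by
        rw [e4]
        exact (Finset.abs_sum_le_sum_abs _ _).trans (Finset.sum_le_sum fun i' _ => hterm i')
      have hfac : (∑ i', (-(deriv ℓ (y i' * net (w s) (a s) (x i')))) * ((∑ c, |x i' c|) * (Ss / 2)))
          = (∑ i', (-(deriv ℓ (y i' * net (w s) (a s) (x i')))) * (∑ c, |x i' c|)) * (Ss / 2) := by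
        rw [Finset.sum_mul]; exact Finset.sum_congr rfl fun i' _ => by ring
      rw [hfac] at hsumabs
      rw [abs_mul]
      have h4 : |(4:ℝ)| = 4 := by norm_num
      rw [h4]
      calc 4 * |a' s j * a s j|
          ≤ 4 * ((∑ i', (-(deriv ℓ (y i' * net (w s) (a s) (x i')))) * (∑ c, |x i' c|))
              * (Ss / 2)) := by linarith
        _ = (2 * ∑ i', (-(deriv ℓ (y i' * net (w s) (a s) (x i')))) * (∑ c, |x i' c|)) * Ss := by
            ring
  -- balancedness at time 0
  have hbal0 : a 0 j * a 0 j = ∑ c, w 0 j c * w 0 j c := by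
    have h1 := (hbal j).1
    have h2 : |a 0 j| ^ 2 = norm2 (w 0 j) ^ 2 := by rw [h1]
    rw [sq_abs] at h2
    unfold norm2 at h2
    rw [Real.sq_sqrt (Finset.sum_nonneg fun c _ => sq_nonneg _)] at h2
    calc a 0 j * a 0 j = a 0 j ^ 2 := (sq (a 0 j)).symm
      _ = ∑ c, w 0 j c ^ 2 := h2
      _ = ∑ c, w 0 j c * w 0 j c := Finset.sum_congr rfl fun c _ => sq (w 0 j c)
  have hSnn : ∀ t : ℝ, 0 ≤ a t j * a t j + ∑ c, w t j c * w t j c := fun t =>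
    add_nonneg (mul_self_nonneg _) (Finset.sum_nonneg fun c _ => mul_self_nonneg _)
  have hS0 : 0 < a 0 j * a 0 j + ∑ c, w 0 j c * w 0 j c := by
    have := (hbal j).2
    have h1 : 0 < a 0 j * a 0 j := mul_self_pos.mpr this
    have h2 : 0 ≤ ∑ c, w 0 j c * w 0 j c := Finset.sum_nonneg fun c _ => mul_self_nonneg _
    linarith
  -- integrability of the energy integrand
  have haaInt : ∀ r : ℝ, IntervalIntegrable (fun s => a' s j * a s j + a' s j * a s j) volume 0 r :=
    fun r => ((haInt j r).mul_continuousOn (hac j).continuousOn).add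
      ((haInt j r).mul_continuousOn (hac j).continuousOn)
  have hwwInt : ∀ c, ∀ r : ℝ,
      IntervalIntegrable (fun s => w' s j c * w s j c + w' s j c * w s j c) volume 0 r :=
    fun c r => ((hwInt j c r).mul_continuousOn (hwc j c).continuousOn).add
      ((hwInt j c r).mul_continuousOn (hwc j c).continuousOn)
  -- D is constant (zero) on [0, ∞)
  have hDzero : ∀ t : ℝ, 0 ≤ t → a t j * a t j = ∑ c, w t j c * w t j c := by
    intro t ht
    have hD := (hEftc t).2
    have hz : (∫ s in (0:ℝ)..t, ((a' s j * a s j + a' s j * a s j)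
        - ∑ c, (w' s j c * w s j c + w' s j c * w s j c))) = 0 := by
      rw [intervalIntegral.integral_of_le ht]
      apply integral_eq_zero_of_ae
      have hsub : Set.Ioc (0:ℝ) t ⊆ Set.Ici (0:ℝ) := fun z hz => le_of_lt hz.1
      filter_upwards [ae_restrict_of_ae_restrict_of_subset hsub hae] with s hs
      have := hs.1
      rw [Finset.sum_add_distrib]
      simp only [Pi.zero_apply]
      linarith
    rw [hz] at hD
    linarith [hD, hbal0]
  -- positivity of S, hence a t j ≠ 0, on [0, ∞)
  have hAne : ∀ t : ℝ, 0 ≤ t → a t j ≠ 0 := by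
    intro T hT
    set Ψ : ℝ → ℝ := fun s =>
      ∑ i', (-(deriv ℓ (y i' * net (w s) (a s) (x i')))) * (∑ c, |x i' c|) with hΨ
    have hΨc : Continuous Ψ :=
      continuous_finset_sum _ fun i' _ => ((hdℓc i').neg).mul continuous_const
    obtain ⟨z, hz, hmax'⟩ := isCompact_Icc.exists_isMaxOn (Set.nonempty_Icc.mpr hT)
      (hΨc.continuousOn (s := Set.Icc 0 T))
    have hC : (0:ℝ) ≤ 2 * max (Ψ z) 0 := by
      have := le_max_right (Ψ z) (0:ℝ); linarith
    have hbound : ∀ᵐ s ∂(volume.restrict (Set.Icc (0:ℝ) T)),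
        |(a' s j * a s j + a' s j * a s j)
          + ∑ c, (w' s j c * w s j c + w' s j c * w s j c)|
        ≤ (2 * max (Ψ z) 0) * (a s j * a s j + ∑ c, w s j c * w s j c) := by
      have hsub : Set.Icc (0:ℝ) T ⊆ Set.Ici (0:ℝ) := fun u hu => hu.1
      filter_upwards [ae_restrict_of_ae_restrict_of_subset hsub hae,
        ae_restrict_mem measurableSet_Icc] with s hs hmem
      refine hs.2.trans ?_
      apply mul_le_mul_of_nonneg_right _ (hSnn s)
      have h1 : Ψ s ≤ Ψ z := hmax' hmem
      have h2 : Ψ z ≤ max (Ψ z) 0 := le_max_left _ _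
      have : Ψ s ≤ max (Ψ z) 0 := h1.trans h2
      simp only [hΨ] at this
      linarith
    have hpos := gronwall_pos hC hT
      (fun t => (haaInt t).add (intInt_sum _ (fun c _ => hwwInt c t)))
      (fun t => (hEftc t).1) hSnn hbound hS0 T (Set.mem_Icc.mpr ⟨hT, le_refl T⟩)
    intro h0
    have hEq := hDzero T hT
    rw [h0] at hEq hpos
    simp only [zero_mul] at hEq
    linarith [hpos, hEq.symm.le, hEq.le]
  -- sign constancy
  have hsgnA : ∀ t : ℝ, 0 ≤ t → 0 < Real.sign (a 0 j) * a t j := by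
    intro t ht
    rcases lt_or_gt_of_ne (hbal j).2 with hneg | hpos
    · rw [Real.sign_of_neg hneg]
      rcases lt_trichotomy (a t j) 0 with h | h | h
      · nlinarith
      · exact absurd h (hAne t ht)
      · exfalso
        have hIVT := intermediate_value_Icc ht ((hac j).continuousOn (s := Set.Icc 0 t))
        have h0mem : (0:ℝ) ∈ Set.Icc (a 0 j) (a t j) := Set.mem_Icc.mpr ⟨hneg.le, h.le⟩
        obtain ⟨s, hsmem, hs0⟩ := hIVT h0mem
        exact hAne s hsmem.1 hs0
    · rw [Real.sign_of_pos hpos, one_mul]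
      rcases lt_trichotomy (a t j) 0 with h | h | h
      · exfalso
        have hIVT := intermediate_value_Icc' ht ((hac j).continuousOn (s := Set.Icc 0 t))
        have h0mem : (0:ℝ) ∈ Set.Icc (a t j) (a 0 j) := Set.mem_Icc.mpr ⟨h.le, hpos.le⟩
        obtain ⟨s, hsmem, hs0⟩ := hIVT h0mem
        exact hAne s hsmem.1 hs0
      · exact absurd h (hAne t ht)
      · exact h
  -- final monotonicity
  intro t₁ ht₁ t₂ ht₂ h12
  have ht₁' : (0:ℝ) ≤ t₁ := ht₁
  dsimp only
  have h1 : dotp (w t₂ j) (x i) - dotp (w t₁ j) (x i)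
      = ∫ τ in t₁..t₂, ∑ c, w' τ j c * x i c := by
    unfold dotp
    rw [← Finset.sum_sub_distrib,
      intervalIntegral.integral_finset_sum
        (fun c _ => ((intInt_all (hwInt j c) t₁ t₂).mul_const _))]
    refine Finset.sum_congr rfl fun c _ => ?_
    rw [← sub_mul, prim_diff (hwInt j c) (fun t => hwFTC t j c) t₁ t₂,
      ← intervalIntegral.integral_mul_const]
  have h2 : 0 ≤ ∫ τ in t₁..t₂, (Real.sign (a 0 j) * y i * ∑ c, w' τ j c * x i c) := by
    apply intervalIntegral.integral_nonneg_of_ae_restrict h12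
    have hsub : Set.Icc t₁ t₂ ⊆ Set.Ici (0:ℝ) := fun u hu => le_trans ht₁' hu.1
    filter_upwards [ae_restrict_of_ae_restrict_of_subset hsub hODE,
      ae_restrict_mem measurableSet_Icc] with τ hτ hmem
    obtain ⟨σ, hσ01, hσ0, hσ1, hw', _⟩ := hτ
    have hτ0 : (0:ℝ) ≤ τ := le_trans ht₁' hmem.1
    have e1 : (∑ c, w' τ j c * x i c)
        = ∑ i', (-(deriv ℓ (y i' * net (w τ) (a τ) (x i'))
            * y i' * a τ j * σ i' j)) * dotp (x i') (x i) := by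
      rw [← hswap]
      refine Finset.sum_congr rfl fun c _ => ?_
      rw [hw' j c, ← Finset.sum_neg_distrib]
      congr 1
      exact Finset.sum_congr rfl fun i' _ => by ring
    simp only [Pi.zero_apply]
    rw [e1, Finset.mul_sum]
    apply Finset.sum_nonneg
    intro i' _
    have hdl : 0 ≤ -(deriv ℓ (y i' * net (w τ) (a τ) (x i'))) :=
      le_of_lt (neg_pos.mpr (hℓd.1 _))
    have hσnn : 0 ≤ σ i' j := (hσ01 i' j).1
    have hsa : 0 ≤ Real.sign (a 0 j) * a τ j := le_of_lt (hsgnA τ hτ0)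
    have hyy : 0 ≤ y i * y i' * dotp (x i') (x i) := by
      by_cases hcase : y i' = y i
      · have h4 : 0 < dotp (x i') (x i) := hsep1 i' i hcase
        have h5 : y i * y i' = 1 := by
          rcases hy i with h | h <;> rw [hcase, h] <;> norm_num
        rw [h5]; linarith
      · have h4 : dotp (x i') (x i) ≤ 0 := hsep2 i' i hcase
        have h5 : y i * y i' = -1 := by
          rcases hy i with h | h <;> rcases hy i' with h' | h' <;>
            rw [h, h'] <;> rw [h, h'] at hcase <;> norm_num at hcase <;> norm_num
        rw [h5]; linarith
    have heq : Real.sign (a 0 j) * y i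
          * ((-(deriv ℓ (y i' * net (w τ) (a τ) (x i')) * y i' * a τ j * σ i' j))
              * dotp (x i') (x i))
        = ((-(deriv ℓ (y i' * net (w τ) (a τ) (x i')))) * σ i' j)
            * ((Real.sign (a 0 j) * a τ j) * (y i * y i' * dotp (x i') (x i))) := by
      ring
    rw [heq]
    exact mul_nonneg (mul_nonneg hdl hσnn) (mul_nonneg hsa hyy)
  have h3 : 0 ≤ Real.sign (a 0 j) * y i
      * (dotp (w t₂ j) (x i) - dotp (w t₁ j) (x i)) := by
    rw [h1, ← intervalIntegral.integral_const_mul]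
    exact h2
  rw [mul_sub] at h3
  linarith
end
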